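/- Let M be an invertible m×m matrix over a field. Then for every k-element subset I, J of {1,...,m}, det(M^{-1}[I,J]) = (-1)^{σ(I)+σ(J)} det(M[Jᶜ,Iᶜ]) / det(M). -/

import Mathlib

/-- The minor `det M[I,J]` of a square matrix `M`, with rows the subset `I` and columns
the subset `J` (both taken in increasing order). -/
noncomputable def minorDet {F : Type*} [Field F] {m : ℕ} (M : Matrix (Fin m) (Fin m) F)
    (I J : Finset (Fin m)) (h : J.card = I.card) : F :=
  Matrix.det (Matrix.of fun a b : Fin I.card =>
    M ((I.orderIsoOfFin rfl a : Fin m)) ((J.orderIsoOfFin h b : Fin m)))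

/-- `σ(I)`: the sum of the elements of `I ⊆ {1,…,m}` (elements of `Fin m` counted as
`1,…,m`). -/
def sigmaSum {m : ℕ} (I : Finset (Fin m)) : ℕ := ∑ i ∈ I, ((i : ℕ) + 1)


open Matrix Finset Equiv

private lemma block_inv_det {F : Type*} [Field F] {n o : Type*} [Fintype n] [Fintype o]
    [DecidableEq n] [DecidableEq o] (M : Matrix (n ⊕ o) (n ⊕ o) F) (hM : IsUnit M.det) :
    (M⁻¹.toBlocks₁₁).det * M.det = (M.toBlocks₂₂).det := by
  have h : M * M⁻¹ = 1 := M.mul_nonsing_inv hM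
  set B := M⁻¹ with hB
  have h2 : fromBlocks (M.toBlocks₁₁ * B.toBlocks₁₁ + M.toBlocks₁₂ * B.toBlocks₂₁)
      (M.toBlocks₁₁ * B.toBlocks₁₂ + M.toBlocks₁₂ * B.toBlocks₂₂)
      (M.toBlocks₂₁ * B.toBlocks₁₁ + M.toBlocks₂₂ * B.toBlocks₂₁)
      (M.toBlocks₂₁ * B.toBlocks₁₂ + M.toBlocks₂₂ * B.toBlocks₂₂)
      = fromBlocks 1 0 0 1 := by
    rw [← fromBlocks_multiply, fromBlocks_toBlocks, fromBlocks_toBlocks, h, fromBlocks_one]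
  have e11 : M.toBlocks₁₁ * B.toBlocks₁₁ + M.toBlocks₁₂ * B.toBlocks₂₁ = 1 := by
    have := congrArg Matrix.toBlocks₁₁ h2
    rwa [toBlocks_fromBlocks₁₁, toBlocks_fromBlocks₁₁] at this
  have e21 : M.toBlocks₂₁ * B.toBlocks₁₁ + M.toBlocks₂₂ * B.toBlocks₂₁ = 0 := by
    have := congrArg Matrix.toBlocks₂₁ h2
    rwa [toBlocks_fromBlocks₂₁, toBlocks_fromBlocks₂₁] at this
  have key : M * fromBlocks B.toBlocks₁₁ 0 B.toBlocks₂₁ 1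
      = fromBlocks 1 M.toBlocks₁₂ 0 M.toBlocks₂₂ := by
    conv_lhs => rw [← fromBlocks_toBlocks M]
    rw [fromBlocks_multiply]
    simp [e11, e21]
  have hd := congrArg Matrix.det key
  rw [det_mul, det_fromBlocks_zero₁₂, det_fromBlocks_zero₂₁] at hd
  simp only [det_one, one_mul, mul_one] at hd
  rw [mul_comm] at hd
  exact hd

open Matrix Finset Equiv

private lemma swap_orderEmbOfFin {m n : ℕ} {x y : Fin m} (hxy : (x : ℕ) + 1 = (y : ℕ))
    {S T : Finset (Fin m)} (hTdef : T = insert x (S.erase y))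
    (hxS : x ∉ S) (hyS : y ∈ S) (hS : S.card = n) (hT : T.card = n) (a : Fin n) :
    Equiv.swap x y (T.orderEmbOfFin hT a) = S.orderEmbOfFin hS a := by
  have hxyne : x ≠ y := by
    intro h; rw [h] at hxy; omega
  have hyT : y ∉ T := by
    subst hTdef
    simp [Finset.mem_insert, hxyne.symm]
  have hmemT : ∀ v ∈ T, v = x ∨ (v ≠ y ∧ v ∈ S) := by
    intro v hv
    rw [hTdef, Finset.mem_insert, Finset.mem_erase] at hv
    tauto
  set f : Fin n → Fin m := fun b => Equiv.swap x y (T.orderEmbOfFin hT b) with hf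
  have hfS : ∀ b, f b ∈ S := by
    intro b
    rcases hmemT _ (T.orderEmbOfFin_mem hT b) with h | ⟨h1, h2⟩
    · simp [hf, h, Equiv.swap_apply_left, hyS]
    · have hne : T.orderEmbOfFin hT b ≠ x := by
        intro hc
        rw [hc] at h2; exact hxS h2
      simp [hf, Equiv.swap_apply_of_ne_of_ne hne h1, h2]
  have hmono : StrictMono f := by
    intro a b hab
    have hvw : T.orderEmbOfFin hT a < T.orderEmbOfFin hT b :=
      (T.orderEmbOfFin hT).strictMono hab
    set v := T.orderEmbOfFin hT a with hv
    set w := T.orderEmbOfFin hT b with hw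
    have hvT : v = x ∨ (v ≠ y ∧ v ∈ S) := hmemT _ (T.orderEmbOfFin_mem hT a)
    have hwT : w = x ∨ (w ≠ y ∧ w ∈ S) := hmemT _ (T.orderEmbOfFin_mem hT b)
    have hvy : v ≠ y := fun hc => hyT (hc ▸ (T.orderEmbOfFin_mem hT a))
    have hwy : w ≠ y := fun hc => hyT (hc ▸ (T.orderEmbOfFin_mem hT b))
    show Equiv.swap x y v < Equiv.swap x y w
    rcases hvT with hvx | ⟨hvy2, hvS⟩
    · -- v = x, so swap v = y; w > x and w ≠ y hence w > y
      have hwx : w ≠ x := by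
        intro hc; rw [hvx, hc] at hvw; exact lt_irrefl _ hvw
      rw [hvx, Equiv.swap_apply_left, Equiv.swap_apply_of_ne_of_ne hwx hwy]
      have h1 : (x : ℕ) < (w : ℕ) := by rw [hvx] at hvw; exact hvw
      have h2 : (w : ℕ) ≠ (y : ℕ) := fun hc => hwy (Fin.ext hc)
      exact Fin.lt_def.mpr (by omega)
    · by_cases hwx : w = x
      · -- w = x, swap w = y; v < x < y and v ≠ x, v ≠ y
        have hvx : v ≠ x := by
          intro hc; rw [hc, hwx] at hvw; exact lt_irrefl _ hvw
        rw [hwx, Equiv.swap_apply_left, Equiv.swap_apply_of_ne_of_ne hvx hvy]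
        have h1 : (v : ℕ) < (x : ℕ) := by rw [hwx] at hvw; exact hvw
        exact Fin.lt_def.mpr (by omega)
      · rw [Equiv.swap_apply_of_ne_of_ne (show v ≠ x from fun hc => hxS (hc ▸ hvS)) hvy,
          Equiv.swap_apply_of_ne_of_ne hwx hwy]
        exact hvw
  have := Finset.orderEmbOfFin_unique hS hfS hmono
  exact congrFun this a

open Matrix Finset Equiv

section Glue

variable {m k : ℕ}

private lemma card_compl_fin {I : Finset (Fin m)} (h : I.card = k) : Iᶜ.card = m - k := by
  simp [Finset.card_compl, h]

/-- The canonical bijection `Fin k ⊕ Fin (m-k) ≃ Fin m` determined by a subset `I` of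
cardinality `k`: on the left it enumerates `I` in increasing order, on the right `Iᶜ`. -/
private noncomputable def glueEquiv (I : Finset (Fin m)) (h : I.card = k) :
    (Fin k ⊕ Fin (m - k)) ≃ Fin m :=
  Equiv.ofBijective
    (Sum.elim (I.orderEmbOfFin h) (Iᶜ.orderEmbOfFin (card_compl_fin h)))
    (by
      constructor
      · rintro (a | a) (b | b) hab
        · simp only [Sum.elim_inl] at hab
          exact congrArg Sum.inl ((I.orderEmbOfFin h).injective hab)
        · exfalso
          simp only [Sum.elim_inl, Sum.elim_inr] at hab
          have h1 := I.orderEmbOfFin_mem h a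
          have h2 := Iᶜ.orderEmbOfFin_mem (card_compl_fin h) b
          rw [hab] at h1
          exact (Finset.mem_compl.mp h2) h1
        · exfalso
          simp only [Sum.elim_inl, Sum.elim_inr] at hab
          have h1 := I.orderEmbOfFin_mem h b
          have h2 := Iᶜ.orderEmbOfFin_mem (card_compl_fin h) a
          rw [hab] at h2
          exact (Finset.mem_compl.mp h2) h1
        · simp only [Sum.elim_inr] at hab
          exact congrArg Sum.inr ((Iᶜ.orderEmbOfFin (card_compl_fin h)).injective hab)
      · intro x
        by_cases hx : x ∈ I
        · have : x ∈ Set.range (I.orderEmbOfFin h) := by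
            rw [Finset.range_orderEmbOfFin]; exact hx
          obtain ⟨a, ha⟩ := this
          exact ⟨Sum.inl a, ha⟩
        · have : x ∈ Set.range (Iᶜ.orderEmbOfFin (card_compl_fin h)) := by
            rw [Finset.range_orderEmbOfFin]; simpa using hx
          obtain ⟨a, ha⟩ := this
          exact ⟨Sum.inr a, ha⟩)

@[simp] private lemma glueEquiv_inl (I : Finset (Fin m)) (h : I.card = k) (a : Fin k) :
    glueEquiv I h (Sum.inl a) = I.orderEmbOfFin h a := rfl

@[simp] private lemma glueEquiv_inr (I : Finset (Fin m)) (h : I.card = k) (a : Fin (m - k)) :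
    glueEquiv I h (Sum.inr a) = Iᶜ.orderEmbOfFin (card_compl_fin h) a := rfl

/-- The base subset `{0, …, k-1}` of `Fin m`. -/
private def baseSet (hk : k ≤ m) : Finset (Fin m) :=
  (Finset.range k).attachFin fun n hn => lt_of_lt_of_le (Finset.mem_range.mp hn) hk

private lemma card_baseSet (hk : k ≤ m) : (baseSet hk).card = k := by
  rw [baseSet, Finset.card_attachFin, Finset.card_range]

private lemma mem_baseSet (hk : k ≤ m) (i : Fin m) : i ∈ baseSet hk ↔ (i : ℕ) < k := by
  rw [baseSet, Finset.mem_attachFin, Finset.mem_range]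

/-- The permutation of `Fin m` sending the base arrangement to the one given by `I`. -/
private noncomputable def rho (hk : k ≤ m) (I : Finset (Fin m)) (h : I.card = k) :
    Equiv.Perm (Fin m) :=
  (glueEquiv (baseSet hk) (card_baseSet hk)).symm.trans (glueEquiv I h)

end Glue

section Sign

variable {m k : ℕ}

private lemma compl_insert_erase {x y : Fin m} (hxyne : x ≠ y) {S : Finset (Fin m)}
    (hxS : x ∉ S) (hyS : y ∈ S) :
    (insert x (S.erase y))ᶜ = insert y (Sᶜ.erase x) := by
  ext z
  simp only [Finset.mem_compl, Finset.mem_insert, Finset.mem_erase]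
  constructor
  · intro h
    push_neg at h
    by_cases hz : z = y
    · exact Or.inl hz
    · exact Or.inr ⟨h.1, fun hzS => (h.2 hz) hzS⟩
  · rintro (rfl | ⟨h1, h2⟩) <;> push_neg
    · exact ⟨hxyne.symm, fun h => absurd rfl h⟩
    · exact ⟨h1, fun _ => h2⟩

private lemma exists_adjacent_swap {I : Finset (Fin m)} (hk : k ≤ m) (h : I.card = k)
    (hne : I ≠ baseSet hk) :
    ∃ x y : Fin m, (x : ℕ) + 1 = (y : ℕ) ∧ y ∈ I ∧ x ∉ I := by
  by_contra hcon
  push_neg at hcon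
  -- I is downward closed
  have dc : ∀ j : ℕ, ∀ y : Fin m, y ∈ I → (y : ℕ) ≤ j → ∀ z : Fin m, z ≤ y → z ∈ I := by
    intro j
    induction j with
    | zero =>
      intro y hy hyj z hz
      have : z = y := by
        apply Fin.ext
        have := Fin.le_def.mp hz
        omega
      rwa [this]
    | succ j ih =>
      intro y hy hyj z hz
      by_cases hzy : z = y
      · rwa [hzy]
      · have hzy' : (z : ℕ) < (y : ℕ) := lt_of_le_of_ne (Fin.le_def.mp hz)
          (fun hc => hzy (Fin.ext hc))
        have hy0 : 0 < (y : ℕ) := by omega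
        set x : Fin m := ⟨(y : ℕ) - 1, by omega⟩ with hx
        have hxI : x ∈ I := hcon x y (by simp [hx]; omega) hy
        exact ih x hxI (by simp [hx]; omega) z (Fin.le_def.mpr (by simp [hx]; omega))
  -- hence all elements of I are < k
  have hsub : I ⊆ baseSet hk := by
    intro i hi
    rw [mem_baseSet]
    by_contra hik
    push_neg at hik
    have hIic : Finset.Iic i ⊆ I := fun z hz => dc (i : ℕ) i hi le_rfl z (Finset.mem_Iic.mp hz)
    have hcard := Finset.card_le_card hIic
    rw [Fin.card_Iic, h] at hcard
    omega
  exact hne (Finset.eq_of_subset_of_card_le hsub (by rw [card_baseSet, h]))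

private lemma glueEquiv_swap {x y : Fin m} (hxy : (x : ℕ) + 1 = (y : ℕ))
    {I : Finset (Fin m)} (h : I.card = k) (hy : y ∈ I) (hx : x ∉ I)
    (h' : (insert x (I.erase y)).card = k) (s : Fin k ⊕ Fin (m - k)) :
    Equiv.swap x y (glueEquiv (insert x (I.erase y)) h' s) = glueEquiv I h s := by
  have hxyne : x ≠ y := fun hc => by rw [hc] at hxy; omega
  cases s with
  | inl a =>
    rw [glueEquiv_inl, glueEquiv_inl]
    exact swap_orderEmbOfFin hxy rfl hx hy h h' a
  | inr a =>
    rw [glueEquiv_inr, glueEquiv_inr]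
    -- the complement side
    have hcompl : (insert x (I.erase y))ᶜ = insert y (Iᶜ.erase x) := compl_insert_erase hxyne hx hy
    have hxc : x ∈ Iᶜ := Finset.mem_compl.mpr hx
    have hyc : y ∉ Iᶜ := fun hc => (Finset.mem_compl.mp hc) hy
    have hIc : insert x ((insert x (I.erase y))ᶜ.erase y) = Iᶜ := by
      ext z
      by_cases hzx : z = x <;> by_cases hzy : z = y <;>
        simp_all [Finset.mem_insert, Finset.mem_erase, Finset.mem_compl]
    have hxc' : x ∉ (insert x (I.erase y))ᶜ := by
      rw [Finset.mem_compl]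
      simp
    have hyc' : y ∈ (insert x (I.erase y))ᶜ := by
      rw [hcompl]
      exact Finset.mem_insert_self _ _
    have := swap_orderEmbOfFin hxy hIc.symm hxc' hyc'
      (card_compl_fin h') (card_compl_fin h) a
    -- `this : swap x y (Iᶜ.orderEmbOfFin _ a) = (insert x (I.erase y))ᶜ.orderEmbOfFin _ a`
    rw [← this, Equiv.swap_apply_self]
end Sign

section SignRho

variable {m k : ℕ}

private lemma sign_rho (hk : k ≤ m) :
    ∀ n (I : Finset (Fin m)) (h : I.card = k), (∑ i ∈ I, (i : ℕ)) = n →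
      Equiv.Perm.sign (rho hk I h) = (-1) ^ (n + ∑ i ∈ baseSet hk, (i : ℕ)) := by
  intro n
  induction n using Nat.strong_induction_on with
  | _ n IH =>
    intro I h hsum
    by_cases hI0 : I = baseSet hk
    · have hrefl : rho hk I h = Equiv.refl (Fin m) := by
        subst hI0; exact Equiv.symm_trans_self _
      rw [hrefl]
      have he : Even (n + ∑ i ∈ baseSet hk, (i : ℕ)) := by
        rw [← hI0, hsum]; exact ⟨n, rfl⟩
      rw [Equiv.Perm.sign_refl, he.neg_one_pow]
    · obtain ⟨x, y, hxy, hyI, hxI⟩ := exists_adjacent_swap hk h hI0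
      have hxyne : x ≠ y := fun hc => by rw [hc] at hxy; omega
      have hxE : x ∉ I.erase y := fun hc => hxI (Finset.mem_of_mem_erase hc)
      have hk0 : 0 < k := h ▸ Finset.card_pos.mpr ⟨y, hyI⟩
      have hcard' : (insert x (I.erase y)).card = k := by
        rw [Finset.card_insert_of_notMem hxE, Finset.card_erase_of_mem hyI, h]
        omega
      have hy0 : 0 < (y : ℕ) := by omega
      have hsum' : (∑ i ∈ insert x (I.erase y), (i : ℕ)) + 1 = n := by
        rw [Finset.sum_insert hxE]
        have h1 : (∑ i ∈ I.erase y, (i : ℕ)) + (y : ℕ) = ∑ i ∈ I, (i : ℕ) :=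
          Finset.sum_erase_add I _ hyI
        omega
      have hrho : rho hk I h = Equiv.swap x y * rho hk (insert x (I.erase y)) hcard' := by
        apply Equiv.ext
        intro z
        simp only [rho, Equiv.Perm.mul_apply, Equiv.trans_apply]
        exact (glueEquiv_swap hxy h hyI hxI hcard' ((glueEquiv (baseSet hk) (card_baseSet hk)).symm z)).symm
      rw [hrho, Equiv.Perm.sign_mul, Equiv.Perm.sign_swap hxyne,
        IH (n - 1) (by omega) _ hcard' (by omega)]
      have harr : n + ∑ i ∈ baseSet hk, (i : ℕ)
          = ((n - 1) + ∑ i ∈ baseSet hk, (i : ℕ)) + 1 := by omega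
      rw [harr, pow_succ]
      exact (mul_comm _ _).symm

end SignRho

private lemma jacobiNegOnePowCongr {F : Type*} [Field F] {a b : ℕ} (hab : a % 2 = b % 2) :
    (-1 : F) ^ a = (-1) ^ b := by
  conv_lhs => rw [← Nat.div_add_mod a 2]
  conv_rhs => rw [← Nat.div_add_mod b 2]
  rw [pow_add, pow_add, pow_mul, pow_mul, neg_one_sq, one_pow, one_pow, hab]

/-- Jacobi's theorem on minors of the inverse: for an invertible `m × m`
matrix `M` over a field and `k`-element subsets `I, J` of `{1,…,m}`,
`det(M⁻¹[I,J]) = (-1)^{σ(I)+σ(J)} det(M[Jᶜ,Iᶜ]) / det M`. -/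
theorem jacobi_minors_of_inverse {F : Type*} [Field F] (m k : ℕ)
    (M : Matrix (Fin m) (Fin m) F) (hM : IsUnit M.det)
    (I J : Finset (Fin m)) (hI : I.card = k) (hJ : J.card = k) :
    minorDet M⁻¹ I J (hJ.trans hI.symm)
      = (-1 : F) ^ (sigmaSum I + sigmaSum J) *
          minorDet M Jᶜ Iᶜ (by simp [Finset.card_compl, hI, hJ]) / M.det := by
  subst hI
  have hkm : I.card ≤ m := by simpa using Finset.card_le_univ I
  set eI := glueEquiv I rfl with heI
  set eJ := glueEquiv J hJ with heJ
  set Q := M.submatrix eJ eI with hQ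
  set π : Equiv.Perm (Fin I.card ⊕ Fin (m - I.card)) := eI.trans eJ.symm with hπ
  have hQeq : Q = (M.submatrix eJ eJ).submatrix id ⇑π := by
    ext a b
    simp [hQ, Matrix.submatrix_apply, hπ, Equiv.apply_symm_apply]
  have hQdet : Q.det = ((Equiv.Perm.sign π : ℤ) : F) * M.det := by
    rw [hQeq, Matrix.det_permute', Matrix.det_submatrix_equiv_self]
  -- sign computation
  set e0 := glueEquiv (baseSet hkm) (card_baseSet hkm) with he0
  have hc1 : (e0.symm.trans π).trans e0 = (rho hkm J hJ)⁻¹ * (rho hkm I rfl) := by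
    apply Equiv.ext
    intro z
    simp [rho, hπ, he0, heI, heJ, Equiv.Perm.mul_apply, Equiv.trans_apply, Equiv.Perm.inv_def]
  have hsπ : Equiv.Perm.sign π
      = Equiv.Perm.sign (rho hkm J hJ) * Equiv.Perm.sign (rho hkm I rfl) := by
    rw [← Equiv.Perm.sign_symm_trans_trans π e0, hc1, _root_.map_mul, map_inv]
    simp [Equiv.Perm.sign_inv]
  set c := ∑ i ∈ baseSet hkm, (i : ℕ) with hc
  set sI := ∑ i ∈ I, (i : ℕ) with hsI
  set sJ := ∑ i ∈ J, (i : ℕ) with hsJ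
  have hsign : ((Equiv.Perm.sign π : ℤ) : F) = (-1 : F) ^ (sigmaSum I + sigmaSum J) := by
    rw [hsπ, sign_rho hkm sJ J hJ rfl, sign_rho hkm sI I rfl rfl]
    have h1 : ((((-1 : ℤˣ) ^ (sJ + c) * (-1 : ℤˣ) ^ (sI + c) : ℤˣ) : ℤ) : F)
        = (-1 : F) ^ ((sJ + c) + (sI + c)) := by
      push_cast
      ring
    rw [h1]
    apply jacobiNegOnePowCongr
    have hsigI : sigmaSum I = sI + I.card := by
      rw [sigmaSum, Finset.sum_add_distrib]
      simp [hsI]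
    have hsigJ : sigmaSum J = sJ + I.card := by
      rw [sigmaSum, Finset.sum_add_distrib]
      simp [hsJ, hJ]
    rw [hsigI, hsigJ]
    omega
  -- block identity
  have hQunit : IsUnit Q.det := by
    rw [hQdet, hsign]
    exact (IsUnit.pow _ (isUnit_one.neg)).mul hM
  have key := block_inv_det Q hQunit
  -- identify the two blocks
  have h1 : Q⁻¹.toBlocks₁₁ = Matrix.of (fun a b : Fin I.card =>
      M⁻¹ ((I.orderIsoOfFin rfl a : Fin m)) ((J.orderIsoOfFin hJ b : Fin m))) := by
    rw [hQ, Matrix.inv_submatrix_equiv]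
    ext a b
    simp [Matrix.toBlocks₁₁, Matrix.submatrix_apply, heI, heJ,
      Finset.coe_orderIsoOfFin_apply]
  have hJc : Jᶜ.card = m - I.card := card_compl_fin hJ
  have h2 : ∀ (prf : Iᶜ.card = Jᶜ.card), (Q.toBlocks₂₂).det = minorDet M Jᶜ Iᶜ prf := by
    intro prf
    have hblock : Q.toBlocks₂₂ = (Matrix.of (fun a b : Fin Jᶜ.card =>
        M ((Jᶜ.orderIsoOfFin rfl a : Fin m)) ((Iᶜ.orderIsoOfFin prf b : Fin m)))).submatrix
        (finCongr hJc.symm) (finCongr hJc.symm) := by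
      ext a b
      simp only [Matrix.toBlocks₂₂, Matrix.submatrix_apply, Matrix.of_apply, hQ, heI, heJ,
        glueEquiv_inr, Finset.coe_orderIsoOfFin_apply]
      exact congrArg₂ M (Finset.orderEmbOfFin_eq_orderEmbOfFin_iff.mpr (by simp))
        (Finset.orderEmbOfFin_eq_orderEmbOfFin_iff.mpr (by simp))
    rw [hblock, Matrix.det_submatrix_equiv_self, minorDet]
  rw [minorDet, ← h1, ← h2, ← hsign]
  -- final algebra
  have hMne : M.det ≠ 0 := hM.ne_zero
  set s : F := ((Equiv.Perm.sign π : ℤ) : F) with hs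
  have hs1 : s * s = 1 := by
    rw [hsign, ← pow_add]
    exact Even.neg_one_pow ⟨sigmaSum I + sigmaSum J, rfl⟩
  rw [hQdet] at key
  rw [eq_div_iff hMne]
  calc (Q⁻¹.toBlocks₁₁).det * M.det
      = (s * s) * ((Q⁻¹.toBlocks₁₁).det * M.det) := by rw [hs1, one_mul]
    _ = s * ((Q⁻¹.toBlocks₁₁).det * (s * M.det)) := by ring
    _ = s * (Q.toBlocks₂₂).det := by rw [key]
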